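/- Let R be a commutative (possibly non-unital) ring with all (n+1)-fold products zero, m ≥ 1 an integer, and a, b ∈ R. If a = b + m·h + b·h for some h ∈ R, then p_n(a) − p_n(b) ∈ m^n·R + J_{n+1}, where p_n(x) = Σ_{k=1}^{n} (-1)^{k-1} (ℓ(n)/k) m^{n-k} x^k and J_{n+1} is the subgroup generated by all (n+1)-fold products of elements of R; in fact p_n(a) = p_n(b) + m^n·v for some v in the subring generated by h. -/

import Mathlib

/-- `ℓ(n) = lcm(1,…,n)`. -/
def lcmN (n : ℕ) : ℕ := (Finset.Icc 1 n).lcm id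

/-- `npow1 a j = a^{j+1}` in a non-unital ring. -/
def npow1 {R : Type*} [NonUnitalCommRing R] (a : R) : ℕ → R
  | 0 => a
  | j + 1 => npow1 a j * a

/-- Evaluation of `p_n(x) = ∑_{k=1}^n (-1)^{k-1} (ℓ(n)/k) m^{n-k} x^k` at `a` in a
non-unital ring (the constant term vanishes). -/
def pEval {R : Type*} [NonUnitalCommRing R] (m : ℕ) (n : ℕ) (a : R) : R :=
  ∑ k ∈ Finset.Icc 1 n,
    ((-1 : ℤ) ^ (k - 1) * ((lcmN n / k : ℕ) : ℤ) * (m : ℤ) ^ (n - k)) • npow1 a (k - 1)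

open MvPolynomial Finsupp

abbrev MVP := MvPolynomial (Fin 2) ℤ

section lists
variable {R : Type*} [NonUnitalCommRing R]

lemma foldl_zero (l : List R) : l.foldl (· * ·) 0 = 0 := by
  induction l with
  | nil => rfl
  | cons c l ih => simpa using ih

lemma mul_foldl (a : R) (l : List R) : ∀ y : R, a * l.foldl (· * ·) y = l.foldl (· * ·) (a * y) := by
  induction l with
  | nil => intro y; rfl
  | cons c l ih =>
    intro y
    simp only [List.foldl_cons]
    rw [ih (y * c), mul_assoc]

lemma npow1_eq_foldl (x : R) : ∀ j, npow1 x j = (List.replicate j x).foldl (· * ·) x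
  | 0 => rfl
  | j + 1 => by
    rw [List.replicate_succ', List.foldl_append, ← npow1_eq_foldl x j]; rfl

variable {n : ℕ}

lemma foldl_big (hnil : ∀ (x : R) (l : List R), l.length = n → l.foldl (· * ·) x = 0) (x : R) (l : List R) (hl : n ≤ l.length) : l.foldl (· * ·) x = 0 := by
  rw [← List.take_append_drop n l, List.foldl_append,
    hnil x _ (by rw [List.length_take]; omega), foldl_zero]

lemma npow1_big (hnil : ∀ (x : R) (l : List R), l.length = n → l.foldl (· * ·) x = 0) (x : R) (i : ℕ) (hi : n ≤ i) : npow1 x i = 0 := by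
  rw [npow1_eq_foldl]
  exact foldl_big hnil x _ (by simpa using hi)

lemma npow1_mul_npow1 (hnil : ∀ (x : R) (l : List R), l.length = n → l.foldl (· * ·) x = 0) (x y : R) (i j : ℕ) (hij : n ≤ i + j + 1) :
    npow1 x i * npow1 y j = 0 := by
  rw [npow1_eq_foldl, npow1_eq_foldl, mul_foldl, ← List.foldl_cons, ← List.foldl_append]
  exact foldl_big hnil x _ (by simp; omega)

end lists

section unit
variable {R : Type*} [NonUnitalCommRing R]
open Unitization

lemma inr_npow1 (x : R) : ∀ j, ((npow1 x j : R) : Unitization ℤ R) = (x : Unitization ℤ R) ^ (j + 1)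
  | 0 => (pow_one _).symm
  | j + 1 => by
    show ((npow1 x j * x : R) : Unitization ℤ R) = _
    rw [Unitization.inr_mul, inr_npow1 x j, ← pow_succ]

lemma pow_mul_pow_zero {n : ℕ} (hnil : ∀ (x : R) (l : List R), l.length = n → l.foldl (· * ·) x = 0)
    (b h : R) (i j : ℕ) (hij : n + 1 ≤ i + j) :
    ((b : Unitization ℤ R)) ^ i * ((h : Unitization ℤ R)) ^ j = 0 := by
  match i, j with
  | 0, j =>
    obtain ⟨j, rfl⟩ : ∃ j', j = j' + 1 := ⟨j - 1, by omega⟩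
    rw [pow_zero, one_mul, ← inr_npow1, npow1_big hnil h j (by omega), Unitization.inr_zero]
  | i + 1, 0 =>
    rw [pow_zero, mul_one, ← inr_npow1, npow1_big hnil b i (by omega), Unitization.inr_zero]
  | i + 1, j + 1 =>
    rw [← inr_npow1, ← inr_npow1, ← Unitization.inr_mul,
      npow1_mul_npow1 hnil b h i j (by omega), Unitization.inr_zero]

end unit


/-- all coefficients of (total) degree `< c` vanish. -/
def lowZero (c : ℕ) (p : MVP) : Prop :=
  ∀ d : Fin 2 →₀ ℕ, d 0 + d 1 < c → MvPolynomial.coeff d p = 0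

lemma degF_add (d1 d2 : Fin 2 →₀ ℕ) :
    ((d1 + d2) 0 + (d1 + d2) 1) = (d1 0 + d1 1) + (d2 0 + d2 1) := by
  simp [Finsupp.add_apply]; ring

lemma lowZero_sub {c : ℕ} {p q : MVP} (hp : lowZero c p) (hq : lowZero c q) :
    lowZero c (p - q) := fun d hd => by
  rw [coeff_sub, hp d hd, hq d hd, sub_zero]

lemma lowZero_mul_left {c : ℕ} {p : MVP} (hp : lowZero c p) (q : MVP) :
    lowZero c (q * p) := fun d hd => by
  rw [coeff_mul]
  refine Finset.sum_eq_zero fun x hx => ?_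
  rw [Finset.HasAntidiagonal.mem_antidiagonal] at hx
  have : x.2 0 + x.2 1 < c := by
    have := degF_add x.1 x.2
    rw [hx] at this; omega
  rw [hp x.2 this, mul_zero]

lemma lowZero_mul_right {c : ℕ} {p : MVP} (hp : lowZero c p) (q : MVP) :
    lowZero c (p * q) := fun d hd => by
  rw [coeff_mul]
  refine Finset.sum_eq_zero fun x hx => ?_
  rw [Finset.HasAntidiagonal.mem_antidiagonal] at hx
  have : x.1 0 + x.1 1 < c := by
    have := degF_add x.1 x.2
    rw [hx] at this; omega
  rw [hp x.1 this, zero_mul]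

lemma lowZero_mul {c1 c2 : ℕ} {p q : MVP} (hp : lowZero c1 p) (hq : lowZero c2 q) :
    lowZero (c1 + c2) (p * q) := fun d hd => by
  rw [coeff_mul]
  refine Finset.sum_eq_zero fun x hx => ?_
  rw [Finset.HasAntidiagonal.mem_antidiagonal] at hx
  have hdeg := degF_add x.1 x.2
  rw [hx] at hdeg
  rcases lt_or_ge (x.1 0 + x.1 1) c1 with h1 | h1
  · rw [hp x.1 h1, zero_mul]
  · rw [hq x.2 (by omega), mul_zero]

lemma lowZero_pow {p : MVP} (hp : lowZero 1 p) (k : ℕ) : lowZero k (p ^ k) := by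
  induction k with
  | zero => exact fun d hd => absurd hd (by omega)
  | succ k ih => rw [pow_succ]; exact lowZero_mul ih hp

lemma lowZero_one_iff {p : MVP} (hp : constantCoeff p = 0) : lowZero 1 p := by
  intro d hd
  have : d = 0 := by
    ext i
    fin_cases i <;> simp <;> omega
  rw [this]
  exact hp

/-- cancellation: if `u` has nonzero constant coefficient (in ℤ) and `u*v` is low-zero,
so is `v`. -/
lemma lowZero_cancel {c : ℕ} {u v : MVP} (hu : constantCoeff u ≠ 0)
    (h : lowZero c (u * v)) : lowZero c v := by
  have key : ∀ N : ℕ, ∀ d : Fin 2 →₀ ℕ, d 0 + d 1 = N → N < c → coeff d v = 0 := by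
    intro N
    induction N using Nat.strong_induction_on with
    | _ N ih =>
      intro d hdN hNc
      have hmul := h d (by omega)
      rw [coeff_mul] at hmul
      rw [Finset.sum_eq_single ((0 : Fin 2 →₀ ℕ), d)] at hmul
      · have : coeff 0 u * coeff d v = 0 := hmul
        rcases mul_eq_zero.mp this with h' | h'
        · exact absurd h' hu
        · exact h'
      · rintro ⟨d1, d2⟩ hx hne
        rw [Finset.HasAntidiagonal.mem_antidiagonal] at hx
        rcases eq_or_ne d1 0 with rfl | hd1
        · obtain rfl : d2 = d := by simpa using hx
          exact absurd rfl hne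
        · have hpos : 0 < d1 0 + d1 1 := by
            rcases Finsupp.ne_iff.mp hd1 with ⟨i, hi⟩
            fin_cases i <;> simp at hi <;> omega
          have hdeg := degF_add d1 d2
          rw [hx] at hdeg
          rw [ih (d2 0 + d2 1) (by omega) d2 rfl (by omega), mul_zero]
      · intro habs
        exact absurd (Finset.HasAntidiagonal.mem_antidiagonal.mpr (zero_add d)) habs
  intro d hd
  exact key (d 0 + d 1) d rfl (by omega)

lemma coeff_pderiv (i : Fin 2) (p : MVP) (d : Fin 2 →₀ ℕ) :
    coeff d (pderiv i p) = ((d i : ℤ) + 1) * coeff (d + Finsupp.single i 1) p := by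
  induction p using MvPolynomial.induction_on' with
  | monomial u c =>
    rw [pderiv_monomial, coeff_monomial, coeff_monomial]
    rcases eq_or_ne u (d + Finsupp.single i 1) with rfl | hne
    · rw [if_pos, if_pos rfl]
      · push_cast [Finsupp.add_apply, Finsupp.single_apply]
        simp
        ring
      · rw [add_tsub_cancel_right]
    · rw [if_neg hne]
      rcases Nat.eq_zero_or_pos (u i) with hui | hui
      · rcases eq_or_ne (u - Finsupp.single i 1) d with he | he
        · rw [if_pos he, hui]; push_cast; ring
        · rw [if_neg he, mul_zero]
      · rcases eq_or_ne (u - Finsupp.single i 1) d with he | he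
        · exfalso
          apply hne
          rw [← he, tsub_add_cancel_of_le]
          rwa [Finsupp.single_le_iff]
        · rw [if_neg he, mul_zero]
  | add p q hp hq =>
    rw [map_add, coeff_add, coeff_add, hp, hq]
    ring

lemma lowZero_of_pderiv {c : ℕ} {p : MVP} (h0 : constantCoeff p = 0)
    (hder : ∀ i : Fin 2, lowZero c (pderiv i p)) : lowZero (c + 1) p := by
  have key : ∀ N : ℕ, ∀ d : Fin 2 →₀ ℕ, d 0 + d 1 = N → N < c + 1 → coeff d p = 0 := by
    intro N
    induction N using Nat.strong_induction_on with
    | _ N ih =>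
      intro d hdN hNc
      rcases eq_or_ne d 0 with rfl | hd
      · exact h0
      · obtain ⟨i, hi⟩ : ∃ i, d i ≠ 0 := Finsupp.ne_iff.mp hd
        have hNpos : 1 ≤ N := by fin_cases i <;> simp at hi <;> omega
        set d' := d - Finsupp.single i 1 with hd'
        have hsum : d' + Finsupp.single i 1 = d :=
          tsub_add_cancel_of_le (Finsupp.single_le_iff.mpr (by omega))
        have hdeg : d' 0 + d' 1 = N - 1 := by
          have h0' : d' 0 = d 0 - (Finsupp.single i 1) 0 := Finsupp.tsub_apply _ _ 0
          have h1' : d' 1 = d 1 - (Finsupp.single i 1) 1 := Finsupp.tsub_apply _ _ 1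
          fin_cases i <;>
            simp only [Finsupp.single_apply, if_pos rfl] at h0' h1' <;>
            simp_all <;> omega
        have hz : coeff d' (pderiv i p) = 0 := hder i d' (by omega)
        rw [coeff_pderiv, hsum] at hz
        have hne : ((d' i : ℤ) + 1) ≠ 0 := by positivity
        exact (mul_eq_zero.mp hz).resolve_left hne
  intro d hd
  exact key (d 0 + d 1) d rfl hd

lemma sum_Icc1 {M : Type*} [AddCommMonoid M] (n : ℕ) (f : ℕ → M) :
    ∑ k ∈ Finset.Icc 1 n, f k = ∑ i ∈ Finset.range n, f (i + 1) := by
  rw [← Finset.Ico_add_one_right_eq_Icc, Finset.sum_Ico_eq_sum_range]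
  simp [add_comm]

/-- coefficient of `p_n` (with parameter `m`), at index `k`. -/
def Pc (n m k : ℕ) : ℤ := (-1) ^ (k - 1) * ((lcmN n / k : ℕ) : ℤ) * (m : ℤ) ^ (n - k)

noncomputable def Ppoly (n m : ℕ) (t : MVP) : MVP := ∑ k ∈ Finset.Icc 1 n, C (Pc n m k) * t ^ k

noncomputable def Qpoly (n m : ℕ) (t : MVP) : MVP :=
  ∑ k ∈ Finset.Icc 1 n, C ((-1 : ℤ) ^ (k - 1) * (lcmN n : ℤ) * (m : ℤ) ^ (n - k)) * t ^ (k - 1)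

lemma pderiv_Ppoly (n m : ℕ) (i : Fin 2) (t : MVP) :
    pderiv i (Ppoly n m t) = Qpoly n m t * pderiv i t := by
  rw [Ppoly, map_sum, Qpoly, Finset.sum_mul]
  refine Finset.sum_congr rfl fun k hk => ?_
  have hdvd : k ∣ lcmN n := Finset.dvd_lcm (f := id) hk
  have h2 : ((lcmN n / k : ℕ) : ℤ) * (k : ℤ) = (lcmN n : ℤ) := by
    exact_mod_cast Nat.div_mul_cancel hdvd
  rw [pderiv_C_mul, pderiv_pow, ← mul_assoc, ← mul_assoc]
  congr 2
  rw [← map_natCast (C : ℤ →+* MVP) k, ← C_mul]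
  congr 1
  rw [Pc]
  linear_combination ((-1 : ℤ) ^ (k - 1) * (m : ℤ) ^ (n - k)) * h2

lemma telescope (n m : ℕ) (hn : 1 ≤ n) (t : MVP) :
    (C (m : ℤ) + t) * Qpoly n m t
      = C ((lcmN n : ℤ) * (m : ℤ) ^ n) - C ((-1 : ℤ) ^ n * (lcmN n : ℤ)) * t ^ n := by
  set S : ℕ → MVP := fun j => C ((-1 : ℤ) ^ j * (lcmN n : ℤ) * (m : ℤ) ^ (n - j)) * t ^ j with hS
  have step : ∀ k ∈ Finset.Icc 1 n,
      (C (m : ℤ) + t) * (C ((-1 : ℤ) ^ (k - 1) * (lcmN n : ℤ) * (m : ℤ) ^ (n - k)) * t ^ (k - 1))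
        = S (k - 1) - S k := by
    intro k hk
    rw [Finset.mem_Icc] at hk
    obtain ⟨k, rfl⟩ : ∃ k', k = k' + 1 := ⟨k - 1, by omega⟩
    simp only [hS, Nat.add_sub_cancel]
    have h1 : (m : ℤ) ^ (n - k) = (m : ℤ) ^ (n - (k + 1)) * (m : ℤ) := by
      rw [← pow_succ]
      congr 1
      omega
    have h2 : ((-1 : ℤ)) ^ (k + 1) = -(-1 : ℤ) ^ k := by rw [pow_succ]; ring
    rw [h1, h2]
    simp only [map_mul, map_neg]
    ring
  rw [Qpoly, Finset.mul_sum, Finset.sum_congr rfl step, sum_Icc1]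
  simp only [Nat.add_sub_cancel]
  rw [Finset.sum_range_sub' S n]
  simp only [hS, pow_zero, one_mul, pow_zero, mul_one, Nat.sub_zero, Nat.sub_self]
  try ring

noncomputable def fpoly (m : ℕ) : MVP := X 0 + C (m : ℤ) * X 1 + X 0 * X 1
noncomputable def Dpoly (n m : ℕ) : MVP :=
  Ppoly n m (fpoly m) - Ppoly n m (X 0) - C ((m : ℤ) ^ n) * Ppoly n 1 (X 1)

lemma constantCoeff_Ppoly (n m : ℕ) (t : MVP) (ht : constantCoeff t = 0) :
    constantCoeff (Ppoly n m t) = 0 := by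
  rw [Ppoly, map_sum]
  refine Finset.sum_eq_zero fun k hk => ?_
  rw [Finset.mem_Icc] at hk
  rw [map_mul, map_pow, ht, zero_pow (by omega), mul_zero]

lemma constantCoeff_fpoly (m : ℕ) : constantCoeff (fpoly m) = 0 := by
  simp [fpoly]

lemma lowZero_Dpoly (n m : ℕ) (hn : 1 ≤ n) (hm : 1 ≤ m) : lowZero (n + 1) (Dpoly n m) := by
  have hne10 : (1 : Fin 2) ≠ 0 := by decide
  have hne01 : (0 : Fin 2) ≠ 1 := by decide
  have hpf0 : pderiv 0 (fpoly m) = 1 + X 1 := by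
    simp [fpoly, pderiv_mul, pderiv_X_self, pderiv_X_of_ne hne10, pderiv_C_mul]
  have hpf1 : pderiv 1 (fpoly m) = C (m : ℤ) + X 0 := by
    simp [fpoly, pderiv_mul, pderiv_X_self, pderiv_X_of_ne hne01, pderiv_C_mul]
  -- low-zero facts
  have hlf : lowZero n ((fpoly m) ^ n) := lowZero_pow (lowZero_one_iff (constantCoeff_fpoly m)) n
  have hlX0 : lowZero n ((X 0 : MVP) ^ n) := lowZero_pow (lowZero_one_iff (by simp)) n
  have hlX1 : lowZero n ((X 1 : MVP) ^ n) := lowZero_pow (lowZero_one_iff (by simp)) n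
  -- first partial derivative
  have p0 : pderiv 0 (Dpoly n m) = Qpoly n m (fpoly m) * (1 + X 1) - Qpoly n m (X 0) := by
    rw [Dpoly, map_sub, map_sub, pderiv_Ppoly, pderiv_Ppoly, pderiv_C_mul, pderiv_Ppoly,
      hpf0, pderiv_X_self, pderiv_X_of_ne hne10, mul_one, mul_zero, mul_zero, sub_zero]
  have key0 : (C (m : ℤ) + X 0) * (1 + X 1) * pderiv 0 (Dpoly n m)
      = C ((-1 : ℤ) ^ n * (lcmN n : ℤ)) * ((X 0 : MVP) ^ n - (fpoly m) ^ n) * (1 + X 1) := by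
    have T1 := telescope n m hn (fpoly m)
    have T2 := telescope n m hn (X 0)
    rw [p0]
    rw [show fpoly m = X 0 + C (m : ℤ) * X 1 + X 0 * X 1 from rfl] at T1 ⊢
    linear_combination (1 + X (1 : Fin 2)) * T1 - (1 + X (1 : Fin 2)) * T2
  have hlow0 : lowZero n (pderiv 0 (Dpoly n m)) := by
    refine lowZero_cancel (u := (C (m : ℤ) + X 0) * (1 + X 1)) ?_ ?_
    · simp
      omega
    · rw [key0]
      exact lowZero_mul_right (lowZero_mul_left (lowZero_sub hlX0 hlf) _) _
  -- second partial derivative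
  have p1 : pderiv 1 (Dpoly n m) = Qpoly n m (fpoly m) * (C (m : ℤ) + X 0)
      - C ((m : ℤ) ^ n) * Qpoly n 1 (X 1) := by
    rw [Dpoly, map_sub, map_sub, pderiv_Ppoly, pderiv_Ppoly, pderiv_C_mul, pderiv_Ppoly,
      hpf1, pderiv_X_self, pderiv_X_of_ne hne01, mul_one, mul_zero, sub_zero]
  have key1 : (1 + X 1) * pderiv 1 (Dpoly n m)
      = C ((-1 : ℤ) ^ n * (lcmN n : ℤ)) * (C ((m : ℤ) ^ n) * (X 1 : MVP) ^ n - (fpoly m) ^ n) := by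
    have T1 := telescope n m hn (fpoly m)
    have T3 := telescope n 1 hn (X 1)
    simp only [Nat.cast_one, map_one, one_pow, mul_one, one_mul] at T3
    have hC : (C ((lcmN n : ℤ) * (m : ℤ) ^ n) : MVP) = C ((m : ℤ) ^ n) * C ((lcmN n : ℤ)) := by
      rw [← map_mul, mul_comm]
    rw [p1]
    rw [show fpoly m = X 0 + C (m : ℤ) * X 1 + X 0 * X 1 from rfl] at T1 ⊢
    linear_combination T1 - C ((m : ℤ) ^ n) * T3 + hC
  have hlow1 : lowZero n (pderiv 1 (Dpoly n m)) := by
    refine lowZero_cancel (u := 1 + X 1) ?_ ?_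
    · simp
    · rw [key1]
      exact lowZero_mul_left (lowZero_sub (lowZero_mul_left hlX1 _) hlf) _
  have h0 : constantCoeff (Dpoly n m) = 0 := by
    rw [Dpoly, map_sub, map_sub, constantCoeff_Ppoly n m _ (constantCoeff_fpoly m),
      constantCoeff_Ppoly n m _ (by simp), map_mul, constantCoeff_Ppoly n 1 _ (by simp)]
    ring
  have := lowZero_of_pderiv h0 (fun i => by fin_cases i <;> assumption)
  exact this


/-- in a commutative non-unital ring with all `(n+1)`-fold products zero,
if `a = b + m·h + b·h` then `p_n(a) = p_n(b) + m^n·v` for some `v` in the subring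
generated by `h`; in particular `p_n(a) − p_n(b) ∈ m^n·R + J_{n+1}`. -/
theorem stmt16 (R : Type*) [NonUnitalCommRing R] (n : ℕ) (hn : 1 ≤ n)
    (hnil : ∀ (x : R) (l : List R), l.length = n → l.foldl (· * ·) x = 0)
    (m : ℕ) (hm : 1 ≤ m) (a b h : R)
    (hab : a = b + (m : ℤ) • h + b * h) :
    ∃ v ∈ NonUnitalSubring.closure ({h} : Set R),
      pEval m n a = pEval m n b + ((m : ℤ) ^ n) • v := by
  classical
  let A := Unitization ℤ R
  let g : Fin 2 → A := ![(b : A), (h : A)]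
  let π : MVP →ₐ[ℤ] A := aeval g
  have hg0 : g 0 = (b : A) := rfl
  have hg1 : g 1 = (h : A) := rfl
  -- evaluation of Ppoly
  have evalP : ∀ (m' : ℕ) (t : MVP) (c : R), π t = (c : A) →
      π (Ppoly n m' t) = ((pEval m' n c : R) : A) := by
    intro m' t c ht
    have hterm : ∀ k ∈ Finset.Icc 1 n,
        π (C (Pc n m' k) * t ^ k) = ((Pc n m' k • npow1 c (k - 1) : R) : A) := by
      intro k hk
      rw [Finset.mem_Icc] at hk
      obtain ⟨j, rfl⟩ : ∃ j, k = j + 1 := ⟨k - 1, by omega⟩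
      rw [map_mul, (by exact π.map_pow t (j + 1) : π (t ^ (j + 1)) = π t ^ (j + 1)), ht, aeval_C, Nat.add_sub_cancel, ← inr_npow1,
        Unitization.inr_smul]
      exact (Algebra.smul_def _ _).symm
    rw [Ppoly, map_sum, Finset.sum_congr rfl hterm]
    exact (map_sum (Unitization.inrHom ℤ ℤ R) (fun k => Pc n m' k • npow1 c (k - 1))
      (Finset.Icc 1 n)).symm
  -- π of fpoly is a
  have hfa : π (fpoly m) = ((a : R) : A) := by
    rw [fpoly, map_add, map_add, map_mul, map_mul, aeval_X, aeval_X, aeval_C, hg0, hg1, hab]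
    simp only [Unitization.inr_add, Unitization.inr_smul, Unitization.inr_mul]
    congr 2
    exact (Algebra.smul_def _ _).symm
  have hX0b : π (X 0) = ((b : R) : A) := by rw [aeval_X, hg0]
  have hX1h : π (X 1) = ((h : R) : A) := by rw [aeval_X, hg1]
  -- π kills Dpoly
  have hDzero : π (Dpoly n m) = 0 := by
    rw [(Dpoly n m).as_sum, map_sum]
    refine Finset.sum_eq_zero fun d hd => ?_
    have hdeg : n + 1 ≤ d 0 + d 1 := by
      by_contra hlt
      exact (MvPolynomial.mem_support_iff.mp hd) (lowZero_Dpoly n m hn hm d (by omega))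
    rw [aeval_monomial]
    have hprod : (Finsupp.prod d fun i k => g i ^ k) = (b : A) ^ d 0 * (h : A) ^ d 1 := by
      rw [Finsupp.prod_pow, Fin.prod_univ_two, hg0, hg1]
    rw [hprod, pow_mul_pow_zero hnil b h _ _ hdeg, mul_zero]
  -- decomposition
  have hdecomp : Ppoly n m (fpoly m)
      = Ppoly n m (X 0) + C ((m : ℤ) ^ n) * Ppoly n 1 (X 1) + Dpoly n m := by
    rw [Dpoly]; ring
  have hmain := congrArg π hdecomp
  rw [map_add, map_add, map_mul, hDzero, add_zero, evalP m _ a hfa, evalP m _ b hX0b,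
    evalP 1 _ h hX1h, aeval_C, ← Algebra.smul_def, ← Unitization.inr_smul] at hmain
  have hfin : pEval m n a = pEval m n b + ((m : ℤ) ^ n) • pEval 1 n h := by
    apply Unitization.inr_injective (R := ℤ)
    rw [Unitization.inr_add]
    exact hmain
  -- membership
  have hnp : ∀ j, npow1 h j ∈ NonUnitalSubring.closure ({h} : Set R) := by
    intro j
    induction j with
    | zero => exact NonUnitalSubring.subset_closure rfl
    | succ j ih => exact mul_mem ih (NonUnitalSubring.subset_closure rfl)
  refine ⟨pEval 1 n h, ?_, hfin⟩
  exact sum_mem fun k hk => zsmul_mem (hnp _) _
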